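/- arXiv:1312.4413 — 7 statements merged into one kernel-verified Lean document; each statement's English description precedes it below -/
import Mathlib

section
/- Let s_t denote the number of tuples (k, x_0, x_1, ..., x_{2k}) of nonnegative integers with k ≥ 0, x_0 + x_1 + ... + x_{2k} = t, and x_{2i} + x_{2i+1} ≥ 1 for all 0 ≤ i ≤ k-1. Then s_t satisfies the recurrence s_t = 4·s_{t-1} - 2·s_{t-2} for all t ≥ 2, with s_0 = 1 and s_1 = 3. -/
/-- Tuples `(x_0, …, x_{2k})` of nonnegative integers, represented as lists of odd
length, summing to `t`, with `x_{2i} + x_{2i+1} ≥ 1` for all `i < k`. -/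
def goodTuples (t : ℕ) : Set (List ℕ) :=
  {l | l.length % 2 = 1 ∧ l.sum = t ∧
    ∀ i, 2 * i + 2 ≤ l.length → 1 ≤ l.getD (2 * i) 0 + l.getD (2 * i + 1) 0}

/-- Explicit recursive `Finset` realization of `goodTuples`. -/
def G (t : ℕ) : Finset (List ℕ) :=
  {[t]} ∪ (Finset.range t).attach.biUnion fun j =>
    (Finset.range (t - j.1 + 1)).biUnion fun a =>
      (G j.1).image fun l => a :: (t - j.1 - a) :: l
termination_by t
decreasing_by exact Finset.mem_range.mp j.2

lemma mem_G {t : ℕ} {l : List ℕ} :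
    l ∈ G t ↔ l = [t] ∨ ∃ j < t, ∃ a ≤ t - j, ∃ l', l' ∈ G j ∧ l = a :: (t - j - a) :: l' := by
  rw [G]
  simp only [Finset.mem_union, Finset.mem_singleton, Finset.mem_biUnion, Finset.mem_attach,
    Finset.mem_image, Finset.mem_range, true_and, Subtype.exists, Nat.lt_succ_iff]
  constructor
  · rintro (h | ⟨j, hj, a, ha, l', hl', rfl⟩)
    · exact Or.inl h
    · exact Or.inr ⟨j, hj, a, ha, l', hl', rfl⟩
  · rintro (h | ⟨j, hj, a, ha, l', hl', rfl⟩)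
    · exact Or.inl h
    · exact Or.inr ⟨j, hj, a, ha, l', hl', rfl⟩

lemma card_G (t : ℕ) :
    (G t).card = 1 + ∑ j ∈ Finset.range t, (t - j + 1) * (G j).card := by
  rw [G]
  rw [Finset.card_union_of_disjoint, Finset.card_singleton, Finset.card_biUnion]
  · congr 1
    rw [← Finset.sum_attach (Finset.range t)
      (fun j => (t - j + 1) * (G j).card)]
    apply Finset.sum_congr rfl
    intro j _
    rw [Finset.card_biUnion]
    · rw [Finset.sum_const_nat (m := (G j.1).card)]
      · simp [Finset.card_range, Nat.mul_comm]
      · intro a _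
        exact Finset.card_image_of_injective _ (fun x y h => by simpa using h)
    · intro a _ b _ hab
      simp only [Finset.disjoint_left, Finset.mem_image]
      rintro x ⟨l1, _, rfl⟩ ⟨l2, _, h⟩
      exact hab (by simpa using congrArg (fun l => l.headI) h.symm)
  · intro j _ k _ hjk
    simp only [Finset.disjoint_left, Finset.mem_biUnion, Finset.mem_image, Finset.mem_range]
    rintro x ⟨a, ha, l1, _, rfl⟩ ⟨b, hb, l2, _, h⟩
    obtain ⟨h1, h2⟩ := List.cons_eq_cons.mp h.symm
    obtain ⟨h2, -⟩ := List.cons_eq_cons.mp h2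
    have hj := Finset.mem_range.mp j.2
    have hk := Finset.mem_range.mp k.2
    exact hjk (Subtype.ext (by omega))
  · simp only [Finset.disjoint_left, Finset.mem_singleton, Finset.mem_biUnion,
      Finset.mem_image]
    rintro x rfl ⟨j, -, a, -, l, -, h⟩
    simp at h

lemma goodTuples_eq (t : ℕ) : goodTuples t = ↑(G t) := by
  induction t using Nat.strong_induction_on with
  | _ t ih =>
    ext l
    rw [Finset.mem_coe, mem_G]
    show (_ ∧ _ ∧ _) ↔ _
    constructor
    · rintro ⟨hlen, hsum, hpair⟩
      match l with
      | [] => simp at hlen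
      | [x] =>
        left; simp at hsum; simp [hsum]
      | a :: b :: l' =>
        right
        have hab : 1 ≤ a + b := by
          have := hpair 0 (by simp)
          simpa using this
        have hsum' : a + b + l'.sum = t := by simpa [add_assoc] using hsum
        refine ⟨l'.sum, by omega, a, by omega, l', ?_, by
          have h1 : t - l'.sum - a = b := by omega
          rw [h1]⟩
        have : l' ∈ goodTuples l'.sum := by
          refine ⟨by simp at hlen ⊢; omega, rfl, fun i hi => ?_⟩
          have := hpair (i + 1) (by simp at hi ⊢; omega)
          simpa [Nat.mul_add, List.getD_cons_succ] using this
        rw [ih l'.sum (by omega)] at this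
        exact this
    · rintro (rfl | ⟨j, hj, a, ha, l', hl', rfl⟩)
      · exact ⟨rfl, by simp, fun i hi => by simp at hi⟩
      · rw [← Finset.mem_coe, ← ih j hj] at hl'
        obtain ⟨hlen, hsum, hpair⟩ := hl'
        refine ⟨by simp at hlen ⊢; omega, by simp [hsum]; omega, fun i hi => ?_⟩
        match i with
        | 0 => simp; omega
        | i + 1 =>
          have := hpair i (by simp at hi ⊢; omega)
          simpa [Nat.mul_add, List.getD_cons_succ] using this

lemma natCard_goodTuples (t : ℕ) : Nat.card (goodTuples t) = (G t).card := by
  rw [goodTuples_eq, Nat.card_coe_set_eq, Set.ncard_coe_finset]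

lemma key (t : ℕ) :
    Nat.card (goodTuples t) =
      1 + ∑ j ∈ Finset.range t, (t - j + 1) * Nat.card (goodTuples j) := by
  simp only [natCard_goodTuples]
  exact card_G t

lemma sum_shift (c : ℕ → ℕ) (n : ℕ) :
    ∑ j ∈ Finset.range n, (n + 1 - j + 1) * c j =
      ∑ j ∈ Finset.range n, (n - j + 1) * c j + ∑ j ∈ Finset.range n, c j := by
  rw [← Finset.sum_add_distrib]
  refine Finset.sum_congr rfl fun j hj => ?_
  have := Finset.mem_range.mp hj
  have h : n + 1 - j + 1 = (n - j + 1) + 1 := by omega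
  rw [h, add_mul, one_mul]

lemma key_rec (c : ℕ → ℕ)
    (h : ∀ t, c t = 1 + ∑ j ∈ Finset.range t, (t - j + 1) * c j) :
    ∀ u, c (u + 2) + 2 * c u = 4 * c (u + 1) := by
  intro u
  set A := ∑ j ∈ Finset.range u, (u - j + 1) * c j with hA
  set S := ∑ j ∈ Finset.range u, c j with hS
  have h0 : c u = 1 + A := h u
  have h1 : c (u + 1) = 1 + (A + S) + 2 * c u := by
    rw [h (u + 1), Finset.sum_range_succ, sum_shift]
    have : u + 1 - u + 1 = 2 := by omega
    rw [this]
    ring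
  have h2 : c (u + 2) = 1 + (A + S + 2 * c u + (S + c u)) + 2 * c (u + 1) := by
    rw [h (u + 2), Finset.sum_range_succ]
    have e1 : u + 2 - (u + 1) + 1 = 2 := by omega
    rw [e1]
    have e2 : ∑ j ∈ Finset.range (u + 1), (u + 2 - j + 1) * c j =
        ∑ j ∈ Finset.range (u + 1), (u + 1 - j + 1) * c j +
          ∑ j ∈ Finset.range (u + 1), c j := sum_shift c (u + 1)
    rw [e2, Finset.sum_range_succ c, Finset.sum_range_succ (fun j => (u + 1 - j + 1) * c j),
      sum_shift]
    have e3 : u + 1 - u + 1 = 2 := by omega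
    rw [e3]
    ring
  omega

/-- `s_0 = 1`, `s_1 = 3`, and `s_t = 4·s_{t-1} - 2·s_{t-2}` for `t ≥ 2`
(stated additively over ℕ). -/
theorem stmt2 :
    Nat.card (goodTuples 0) = 1 ∧ Nat.card (goodTuples 1) = 3 ∧
      ∀ t : ℕ, 2 ≤ t →
        Nat.card (goodTuples t) + 2 * Nat.card (goodTuples (t - 2)) =
          4 * Nat.card (goodTuples (t - 1)) := by
  have c0 : Nat.card (goodTuples 0) = 1 := by
    rw [key]; simp
  refine ⟨c0, ?_, ?_⟩
  · rw [key]
    simp [Finset.sum_range_one, (Nat.card_coe_set_eq _).symm.trans c0]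
  · intro t ht
    obtain ⟨u, rfl⟩ : ∃ u, t = u + 2 := ⟨t - 2, by omega⟩
    have := key_rec (fun t => Nat.card (goodTuples t)) key u
    simpa using this
end

section
/- Let s_t denote the number of tuples (k, x_0, ..., x_{2k}) of nonnegative integers with x_0 + ... + x_{2k} = t and x_{2i}+x_{2i+1} ≥ 1 for all i < k. Then s_t = (1/4)·(2+√2)^{t+1} + (1/4)·(2−√2)^{t+1} for all t ≥ 0; in particular s_t ≤ (2+√2)^t. -/
lemma singleton_mem (t : ℕ) : [t] ∈ goodTuples t := by
  refine ⟨rfl, by simp, ?_⟩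
  intro i hi
  simp at hi

lemma cons_cons_mem {x0 x1 t : ℕ} {rest : List ℕ} :
    (x0 :: x1 :: rest) ∈ goodTuples t ↔
      1 ≤ x0 + x1 ∧ x0 + x1 ≤ t ∧ rest ∈ goodTuples (t - (x0 + x1)) := by
  simp only [goodTuples, Set.mem_setOf_eq, List.length_cons, List.sum_cons]
  constructor
  · rintro ⟨h1, h2, h3⟩
    have hpair := h3 0 (by omega)
    simp at hpair
    refine ⟨hpair, by omega, ?_, by omega, ?_⟩
    · omega
    · intro i hi
      have := h3 (i + 1) (by omega)
      have e1 : 2 * (i + 1) = 2 * i + 1 + 1 := by ring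
      rw [e1] at this
      simpa [List.getD_cons_succ] using this
  · rintro ⟨h1, h2, h3, h4, h5⟩
    refine ⟨by omega, by omega, ?_⟩
    intro i hi
    match i with
    | 0 => simpa using h1
    | (i + 1) =>
      have := h5 i (by omega)
      have e1 : 2 * (i + 1) = 2 * i + 1 + 1 := by ring
      rw [e1]
      simpa [List.getD_cons_succ] using this

def toGood (t : ℕ) :
    (Unit ⊕ Σ j : Fin t, Fin (t + 1 - j.1) × (goodTuples j.1)) → goodTuples t
  | Sum.inl _ => ⟨[t], singleton_mem t⟩
  | Sum.inr ⟨j, x0, rest⟩ => ⟨x0.1 :: (t - j.1 - x0.1) :: rest.1, by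
      rw [cons_cons_mem]
      have hj := j.2
      have hx := x0.2
      refine ⟨by omega, by omega, ?_⟩
      have h : t - (x0.1 + (t - j.1 - x0.1)) = j.1 := by omega
      rw [h]
      exact rest.2⟩

lemma toGood_bij (t : ℕ) : Function.Bijective (toGood t) := by
  constructor
  · rintro (⟨⟩ | ⟨j, x0, rest⟩) (⟨⟩ | ⟨j', x0', rest'⟩) hab
    · rfl
    · simp only [toGood, Subtype.mk.injEq, List.cons.injEq] at hab
      exact absurd hab.2 (by simp)
    · simp only [toGood, Subtype.mk.injEq, List.cons.injEq] at hab
      exact absurd hab.2 (by simp)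
    · simp only [toGood, Subtype.mk.injEq, List.cons.injEq] at hab
      obtain ⟨h1, h2, h3⟩ := hab
      have hj := j.2; have hj' := j'.2
      have hx := x0.2; have hx' := x0'.2
      have hjj : j = j' := Fin.ext (by omega)
      subst hjj
      have hxx : x0 = x0' := Fin.ext h1
      subst hxx
      have : rest = rest' := Subtype.ext h3
      subst this
      rfl
  · rintro ⟨l, hl⟩
    rcases l with _ | ⟨x0, _ | ⟨x1, rest⟩⟩
    · exact absurd hl.1 (by simp)
    · have hx : x0 = t := by simpa using hl.2.1
      subst hx
      exact ⟨Sum.inl (), rfl⟩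
    · rw [cons_cons_mem] at hl
      obtain ⟨h1, h2, h3⟩ := hl
      refine ⟨Sum.inr ⟨⟨t - (x0 + x1), by omega⟩,
        ⟨x0, by show x0 < t + 1 - (t - (x0 + x1)); omega⟩, ⟨rest, h3⟩⟩, ?_⟩
      apply Subtype.ext
      show x0 :: (t - (t - (x0 + x1)) - x0) :: rest = x0 :: x1 :: rest
      have hmid : t - (t - (x0 + x1)) - x0 = x1 := by omega
      rw [hmid]

noncomputable def goodEquiv (t : ℕ) :
    (Unit ⊕ Σ j : Fin t, Fin (t + 1 - j.1) × (goodTuples j.1)) ≃ goodTuples t :=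
  Equiv.ofBijective _ (toGood_bij t)

lemma finiteGood : ∀ t, Finite (goodTuples t) := by
  intro t
  induction t using Nat.strong_induction_on with
  | _ t ih =>
    haveI : ∀ j : Fin t, Finite (goodTuples j.1) := fun j => ih j.1 j.2
    exact Finite.of_equiv _ (goodEquiv t)

lemma card_good (t : ℕ) :
    Nat.card (goodTuples t)
      = 1 + ∑ j ∈ Finset.range t, (t + 1 - j) * Nat.card (goodTuples j) := by
  haveI := fun n => finiteGood n
  haveI : ∀ j : ℕ, Fintype (goodTuples j) := fun j => Fintype.ofFinite _
  rw [← Nat.card_congr (goodEquiv t), Nat.card_eq_fintype_card, Fintype.card_sum,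
    Fintype.card_sigma]
  simp only [Fintype.card_prod, Fintype.card_fin, Fintype.card_unit]
  rw [Fin.sum_univ_eq_sum_range (fun j => (t + 1 - j) * Fintype.card (goodTuples j))]
  congr 1
  refine Finset.sum_congr rfl fun j _ => ?_
  rw [Nat.card_eq_fintype_card]

noncomputable def b (t : ℕ) : ℝ := (Nat.card (goodTuples t) : ℝ)

lemma b_eq (t : ℕ) : b t = 1 + ∑ j ∈ Finset.range t, ((t : ℝ) + 1 - j) * b j := by
  rw [b, card_good t]
  push_cast
  congr 1
  refine Finset.sum_congr rfl fun j hj => ?_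
  have hj' : j < t := Finset.mem_range.mp hj
  rw [Nat.cast_sub (by omega)]
  push_cast
  ring_nf
  rfl

lemma b_rec3 (t : ℕ) : b (t + 1) = 3 * b t + ∑ j ∈ Finset.range t, b j := by
  have h1 := b_eq (t + 1)
  have h2 := b_eq t
  rw [Finset.sum_range_succ] at h1
  have hsplit : ∀ j ∈ Finset.range t,
      ((t : ℝ) + 1 + 1 - j) * b j = ((t : ℝ) + 1 - j) * b j + b j := by
    intro j _; ring
  push_cast at h1
  rw [Finset.sum_congr rfl hsplit, Finset.sum_add_distrib] at h1
  have hco : ((t : ℝ) + 1 + 1 - (t : ℝ)) = 2 := by ring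
  rw [hco] at h1
  linarith [h1, h2]

lemma b_rec (t : ℕ) : b (t + 2) = 4 * b (t + 1) - 2 * b t := by
  have h1 := b_rec3 (t + 1)
  have h2 := b_rec3 t
  rw [Finset.sum_range_succ] at h1
  linarith

lemma b_zero : b 0 = 1 := by
  rw [b, card_good]; simp

lemma b_one : b 1 = 3 := by
  have := b_rec3 0
  simp [b_zero] at this
  linarith [this]

lemma sqrt2_sq : Real.sqrt 2 ^ 2 = 2 := Real.sq_sqrt (by norm_num)

lemma b_closed (t : ℕ) :
    b t = (1 / 4) * (2 + Real.sqrt 2) ^ (t + 1) + (1 / 4) * (2 - Real.sqrt 2) ^ (t + 1) := by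
  induction t using Nat.twoStepInduction with
  | zero =>
    rw [b_zero]; ring
  | one =>
    rw [b_one]
    linear_combination (-(1/2) : ℝ) * sqrt2_sq
  | more n ih1 ih2 =>
    rw [b_rec, ih1, ih2]
    linear_combination
      (-(1/4) * ((2 + Real.sqrt 2) ^ (n + 1) + (2 - Real.sqrt 2) ^ (n + 1))) * sqrt2_sq

/-- `s_t = (1/4)(2+√2)^{t+1} + (1/4)(2-√2)^{t+1}`; in particular `s_t ≤ (2+√2)^t`. -/
theorem stmt3 (t : ℕ) :
    (Nat.card (goodTuples t) : ℝ) =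
        (1 / 4) * (2 + Real.sqrt 2) ^ (t + 1) + (1 / 4) * (2 - Real.sqrt 2) ^ (t + 1) ∧
      (Nat.card (goodTuples t) : ℝ) ≤ (2 + Real.sqrt 2) ^ t := by
  have hb := b_closed t
  refine ⟨hb, ?_⟩
  have hs2 := sqrt2_sq
  have hnn : (0 : ℝ) ≤ Real.sqrt 2 := Real.sqrt_nonneg 2
  have h2 : Real.sqrt 2 ≤ 2 := by nlinarith
  have hple : (2 - Real.sqrt 2) ^ t ≤ (2 + Real.sqrt 2) ^ t :=
    pow_le_pow_left₀ (by linarith) (by linarith) t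
  have hpos : (0 : ℝ) ≤ (2 + Real.sqrt 2) ^ t := by positivity
  show b t ≤ _
  rw [hb, pow_succ, pow_succ]
  nlinarith [hple, hpos, hnn, h2]
end

section
/- Given integers h, k with 2 ≤ h ≤ k, the number of integer sequences y of length 2k over {2,3} that can be obtained from a fixed sequence x of length 2k over {2,3} by at most h single-character edits (insertions, deletions, substitutions, where inserted/substituted characters come from {2,3}) is at most (h+1)³ · C(2k,h)² · C(3k,h) · 2^h. -/
namespace Levenshtein

/-- A cost structure for Levenshtein edit distance (as in the removed Mathlib file
`Mathlib/Data/List/EditDistance/Defs.lean`). -/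
structure Cost (α β δ : Type*) where
  delete : α → δ
  insert : β → δ
  substitute : α → β → δ

/-- The default cost structure: every deletion, insertion and substitution costs `1`. -/
def defaultCost {α : Type*} [DecidableEq α] : Cost α α ℕ where
  delete _ := 1
  insert _ := 1
  substitute a b := if a = b then 0 else 1

end Levenshtein

/-- Levenshtein distance, by the same recursion the old Mathlib dynamic program computes. -/
def levenshtein {α β δ : Type*} [AddZeroClass δ] [Min δ] (C : Levenshtein.Cost α β δ) :
    List α → List β → δ
  | [], ys => ys.foldr (fun b r => C.insert b + r) 0
  | xs, [] => xs.foldr (fun a r => C.delete a + r) 0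
  | x :: xs, y :: ys =>
      min (C.delete x + levenshtein C xs (y :: ys))
        (min (C.insert y + levenshtein C (x :: xs) ys) (C.substitute x y + levenshtein C xs ys))

namespace Levenshtein

@[simp] lemma defaultCost_delete {α : Type*} [DecidableEq α] (a : α) :
    (defaultCost : Cost α α ℕ).delete a = 1 := rfl

@[simp] lemma defaultCost_insert {α : Type*} [DecidableEq α] (a : α) :
    (defaultCost : Cost α α ℕ).insert a = 1 := rfl

@[simp] lemma defaultCost_substitute {α : Type*} [DecidableEq α] (a b : α) :
    (defaultCost : Cost α α ℕ).substitute a b = if a = b then 0 else 1 := rfl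

end Levenshtein

@[simp] lemma levenshtein_nil_nil {α β δ : Type*} [AddZeroClass δ] [Min δ]
    (C : Levenshtein.Cost α β δ) : levenshtein C [] [] = 0 := by
  rw [levenshtein]; rfl

@[simp] lemma levenshtein_nil_cons {α β δ : Type*} [AddZeroClass δ] [Min δ]
    (C : Levenshtein.Cost α β δ) (y : β) (ys : List β) :
    levenshtein C [] (y :: ys) = C.insert y + levenshtein C [] ys := by
  rw [levenshtein, levenshtein]; rfl

@[simp] lemma levenshtein_cons_nil {α β δ : Type*} [AddZeroClass δ] [Min δ]
    (C : Levenshtein.Cost α β δ) (x : α) (xs : List α) :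
    levenshtein C (x :: xs) [] = C.delete x + levenshtein C xs [] := by
  cases xs <;> simp [levenshtein]

lemma levenshtein_cons_cons {α β δ : Type*} [AddZeroClass δ] [Min δ]
    (C : Levenshtein.Cost α β δ) (x : α) (xs : List α) (y : β) (ys : List β) :
    levenshtein C (x :: xs) (y :: ys) =
      min (C.delete x + levenshtein C xs (y :: ys))
        (min (C.insert y + levenshtein C (x :: xs) ys) (C.substitute x y + levenshtein C xs ys)) := by
  rw [levenshtein]

open Levenshtein

lemma lev_nil_left (y : List ℕ) : levenshtein defaultCost [] y = y.length := by
  induction y with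
  | nil => simp
  | cons a y ih => simp [ih]; omega

lemma lev_nil_right (x : List ℕ) : levenshtein defaultCost x [] = x.length := by
  induction x with
  | nil => simp
  | cons a x ih => simp [ih]; omega

lemma exists_common : ∀ n (x y : List ℕ) (h : ℕ), x.length + y.length ≤ n →
    levenshtein defaultCost x y ≤ h →
    ∃ z : List ℕ, z.Sublist x ∧ z.Sublist y ∧ x.length ≤ z.length + h ∧
      y.length ≤ z.length + h := by
  intro n
  induction n with
  | zero =>
    intro x y h hn _
    refine ⟨[], ?_, ?_, ?_, ?_⟩ <;> simp_all
  | succ n ih =>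
    intro x y h hn hlev
    match x, y with
    | [], y =>
      rw [lev_nil_left] at hlev
      exact ⟨[], List.nil_sublist _, List.nil_sublist _, by simp, by simp; omega⟩
    | x, [] =>
      rw [lev_nil_right] at hlev
      exact ⟨[], List.nil_sublist _, List.nil_sublist _, by simp; omega, by simp⟩
    | a :: x, b :: y =>
      rw [levenshtein_cons_cons] at hlev
      simp only [min_le_iff] at hlev
      rcases hlev with hd | hi | hs
      · -- delete a
        simp only [Levenshtein.defaultCost_delete] at hd
        have h1 : 1 ≤ h := le_trans (by omega) hd
        obtain ⟨z, hzx, hzy, hlx, hly⟩ := ih x (b :: y) (h - 1)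
          (by simp at hn ⊢; omega) (by omega)
        exact ⟨z, hzx.cons a, hzy, by simp at hlx ⊢; omega, by omega⟩
      · -- insert b
        simp only [Levenshtein.defaultCost_insert] at hi
        have h1 : 1 ≤ h := le_trans (by omega) hi
        obtain ⟨z, hzx, hzy, hlx, hly⟩ := ih (a :: x) y (h - 1)
          (by simp at hn ⊢; omega) (by omega)
        exact ⟨z, hzx, hzy.cons b, by omega, by simp at hly ⊢; omega⟩
      · -- substitute
        simp only [Levenshtein.defaultCost_substitute] at hs
        by_cases hab : a = b
        · rw [if_pos hab, zero_add] at hs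
          obtain ⟨z, hzx, hzy, hlx, hly⟩ := ih x y h (by simp at hn ⊢; omega) hs
          subst hab
          exact ⟨a :: z, hzx.cons₂ a, hzy.cons₂ a, by simp at hlx ⊢; omega,
            by simp at hly ⊢; omega⟩
        · rw [if_neg hab] at hs
          have h1 : 1 ≤ h := le_trans (by omega) hs
          obtain ⟨z, hzx, hzy, hlx, hly⟩ := ih x y (h - 1) (by simp at hn ⊢; omega)
            (by omega)
          exact ⟨z, hzx.cons a, hzy.cons b, by simp at hlx ⊢; omega,
            by simp at hly ⊢; omega⟩

/-- Keep the entries of `l` where the mask is `true`. -/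
def sel : List Bool → List ℕ → List ℕ
  | true :: m, a :: l => a :: sel m l
  | false :: m, _ :: l => sel m l
  | _, _ => []

/-- Interleave: `true` takes from first list, `false` takes from second. -/
def splice : List Bool → List ℕ → List ℕ → List ℕ
  | true :: m, a :: z, v => a :: splice m z v
  | false :: m, z, a :: v => a :: splice m z v
  | _, _, _ => []

lemma sel_sublist : ∀ (m : List Bool) (l : List ℕ), (sel m l).Sublist l := by
  intro m
  induction m with
  | nil => intro l; simp [sel]
  | cons b m ih =>
    intro l
    cases l with
    | nil => cases b <;> simp [sel]
    | cons a l =>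
      cases b with
      | true => simpa [sel] using (ih l).cons₂ a
      | false => simpa [sel] using (ih l).cons a

lemma exists_mask {z l : List ℕ} (hs : z.Sublist l) :
    ∃ m : List Bool, m.length = l.length ∧ sel m l = z ∧
      m.count true = z.length ∧ m.count false = l.length - z.length := by
  induction hs with
  | slnil => exact ⟨[], rfl, rfl, rfl, rfl⟩
  | cons a hs ih =>
    obtain ⟨m, h1, h2, h3, h4⟩ := ih
    refine ⟨false :: m, by simp [h1], by simp [sel, h2], by simp [h3], ?_⟩
    have := hs.length_le
    simp [List.count_cons, h4]
    omega
  | cons_cons a hs ih =>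
    obtain ⟨m, h1, h2, h3, h4⟩ := ih
    refine ⟨true :: m, by simp [h1], by simp [sel, h2], by simp [List.count_cons, h3], ?_⟩
    have := hs.length_le
    simp [List.count_cons, h4]

lemma splice_sel : ∀ (m : List Bool) (y : List ℕ), m.length = y.length →
    splice m (sel m y) (sel (m.map not) y) = y := by
  intro m
  induction m with
  | nil =>
    intro y hy
    have : y = [] := by cases y <;> simp_all
    simp [this, splice]
  | cons b m ih =>
    intro y hy
    cases y with
    | nil => simp at hy
    | cons a y =>
      simp at hy
      cases b with
      | true => simp [sel, splice, ih y hy]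
      | false => simp [sel, splice, ih y hy]

/-- The set of positions where the mask is `false`. -/
def falses (m : List Bool) : Finset ℕ :=
  (Finset.range m.length).filter (fun i => m.getD i true = false)

lemma falses_subset (m : List Bool) : falses m ⊆ Finset.range m.length :=
  Finset.filter_subset _ _

lemma mask_of_falses (m : List Bool) :
    (List.range m.length).map (fun i => ! decide (i ∈ falses m)) = m := by
  apply List.ext_getElem (by simp)
  intro i hi hi'
  simp only [List.getElem_map, List.getElem_range]
  have hin : i < m.length := by simpa using hi'
  have hmem : i ∈ falses m ↔ m[i] = false := by
    simp [falses, Finset.mem_filter, Finset.mem_range, hin, List.getD_eq_getElem?_getD,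
      List.getElem?_eq_getElem hin]
  cases hb : m[i] <;> simp [hmem, hb]

lemma card_falses (m : List Bool) : (falses m).card = m.count false := by
  induction m using List.reverseRecOn with
  | nil => simp [falses]
  | append_singleton m b ih =>
    have hlen : (m ++ [b]).length = m.length + 1 := by simp
    have hfilter : falses (m ++ [b]) =
        falses m ∪ (if b = false then {m.length} else ∅) := by
      ext i
      simp only [falses, Finset.mem_filter, Finset.mem_range, hlen, Finset.mem_union]
      constructor
      · rintro ⟨hi, hgd⟩
        rcases lt_or_eq_of_le (Nat.lt_succ_iff.mp hi) with hlt | heq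
        · left
          refine ⟨hlt, ?_⟩
          rwa [List.getD_append _ _ _ _ hlt] at hgd
        · right
          subst heq
          have : (m ++ [b]).getD m.length true = b := by
            simp [List.getD_eq_getElem?_getD]
          rw [this] at hgd
          simp [hgd]
      · rintro (⟨hi, hgd⟩ | hb)
        · exact ⟨by omega, by rwa [List.getD_append _ _ _ _ hi]⟩
        · split at hb
          · simp only [Finset.mem_singleton] at hb
            subst hb
            refine ⟨by omega, ?_⟩
            simpa [List.getD_eq_getElem?_getD] using ‹b = false›
          · simp at hb
    rw [hfilter, Finset.card_union_of_disjoint, ih]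
    · cases b <;> simp [List.count_append]
    · intro s hs1 hs2
      intro i hi
      have h1 := hs1 hi
      have h2 := hs2 hi
      have := falses_subset m h1
      simp only [Finset.mem_range] at this
      split at h2 <;> simp_all

lemma choose_mono_lower {k i j : ℕ} (hij : i ≤ j) (hjk : j ≤ k) :
    Nat.choose (2 * k) i ≤ Nat.choose (2 * k) j := by
  induction j, hij using Nat.le_induction with
  | base => exact le_refl _
  | succ j hj ih =>
    refine le_trans (ih (by omega)) (Nat.choose_le_succ_of_lt_half_left ?_)
    omega

lemma card_small_subsets {k h : ℕ} (hk : h ≤ k) :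
    ((Finset.range (2 * k)).powerset.filter (fun D => D.card ≤ h)).card ≤
      (h + 1) * Nat.choose (2 * k) h := by
  have hsub : (Finset.range (2 * k)).powerset.filter (fun D => D.card ≤ h) ⊆
      (Finset.range (h + 1)).biUnion
        (fun i => Finset.powersetCard i (Finset.range (2 * k))) := by
    intro D hD
    simp only [Finset.mem_filter, Finset.mem_powerset] at hD
    simp only [Finset.mem_biUnion, Finset.mem_range, Finset.mem_powersetCard]
    exact ⟨D.card, by omega, hD.1, rfl⟩
  refine le_trans (Finset.card_le_card hsub) ?_
  refine le_trans (Finset.card_biUnion_le) ?_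
  calc ∑ i ∈ Finset.range (h + 1), (Finset.powersetCard i (Finset.range (2 * k))).card
      ≤ ∑ _i ∈ Finset.range (h + 1), Nat.choose (2 * k) h := by
        refine Finset.sum_le_sum fun i hi => ?_
        rw [Finset.card_powersetCard, Finset.card_range]
        exact choose_mono_lower (by simp at hi; omega) hk
    _ = (h + 1) * Nat.choose (2 * k) h := by
        rw [Finset.sum_const, Finset.card_range, smul_eq_mul]

lemma count_true_map_not (m : List Bool) :
    (m.map not).count true = m.count false := by
  induction m with
  | nil => rfl
  | cons b m ih => cases b <;> simp [List.count_cons, ih]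

lemma sel_length : ∀ (m : List Bool) (l : List ℕ), m.length = l.length →
    (sel m l).length = m.count true := by
  intro m
  induction m with
  | nil => intro l h; simp [sel]
  | cons b m ih =>
    intro l h
    cases l with
    | nil => simp at h
    | cons a l =>
      simp at h
      cases b with
      | true => simp [sel, List.count_cons, ih l h]
      | false => simp [sel, List.count_cons, ih l h]

/-- Decoding function: reconstruct a list from deletion/insertion data. -/
def decodeFn (x : List ℕ) (n h : ℕ) (p : Finset ℕ × Finset ℕ × (Fin h → Bool)) :
    List ℕ :=
  splice ((List.range n).map (fun i => ! decide (i ∈ p.2.1)))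
    (sel ((List.range n).map (fun i => ! decide (i ∈ p.1))) x)
    (((List.ofFn p.2.2).take p.2.1.card).map (fun b => if b then 3 else 2))

open Levenshtein in
/-- The number of sequences over `{2,3}` of length `2k` within Levenshtein distance `h`
of a fixed sequence `x` over `{2,3}` of length `2k` is at most
`(h+1)³ · C(2k,h)² · C(3k,h) · 2^h`. -/
theorem stmt5 (h k : ℕ) (hh : 2 ≤ h) (hk : h ≤ k) (x : List ℕ)
    (hx23 : ∀ a ∈ x, a = 2 ∨ a = 3) (hxlen : x.length = 2 * k) :
    Nat.card {y : List ℕ | y.length = 2 * k ∧ (∀ a ∈ y, a = 2 ∨ a = 3) ∧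
        levenshtein defaultCost x y ≤ h} ≤
      (h + 1) ^ 3 * Nat.choose (2 * k) h ^ 2 * Nat.choose (3 * k) h * 2 ^ h := by
  classical
  set n := 2 * k with hn
  set S₁ : Finset (Finset ℕ) :=
    (Finset.range n).powerset.filter (fun D => D.card ≤ h) with hS₁
  set S : Finset (Finset ℕ × Finset ℕ × (Fin h → Bool)) :=
    S₁ ×ˢ (S₁ ×ˢ Finset.univ) with hS
  set T : Finset (List ℕ) := S.image (decodeFn x n h) with hT
  -- The set is contained in T
  have hsub : {y : List ℕ | y.length = 2 * k ∧ (∀ a ∈ y, a = 2 ∨ a = 3) ∧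
      levenshtein defaultCost x y ≤ h} ⊆ ↑T := by
    intro y hy
    obtain ⟨hylen, hy23, hlev⟩ := hy
    obtain ⟨z, hzx, hzy, hlx, hly⟩ :=
      exists_common (x.length + y.length) x y h (le_refl _) hlev
    obtain ⟨mx, hmxlen, hmxsel, hmxct, hmxcf⟩ := exists_mask hzx
    obtain ⟨my, hmylen, hmysel, hmyct, hmycf⟩ := exists_mask hzy
    have hzlen : z.length ≤ n := by
      have := hzx.length_le; omega
    have hmxlen' : mx.length = n := by omega
    have hmylen' : my.length = n := by omega
    have hcfx : mx.count false ≤ h := by omega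
    have hcfy : my.count false ≤ h := by omega
    set vals : List ℕ := sel (my.map not) y with hvals
    have hvals_sub : vals.Sublist y := sel_sublist _ _
    have hvals_len : vals.length = my.count false := by
      rw [hvals, sel_length _ _ (by simp [hmylen]), count_true_map_not]
    set vpad : Fin h → Bool := fun j => decide (vals.getD j 2 = 3) with hvpad
    refine Finset.mem_coe.mpr (Finset.mem_image.mpr ⟨(falses mx, falses my, vpad), ?_, ?_⟩)
    · -- membership in S
      simp only [hS, Finset.mem_product, Finset.mem_univ, and_true]
      constructor
      · simp only [hS₁, Finset.mem_filter, Finset.mem_powerset]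
        refine ⟨?_, ?_⟩
        · have := falses_subset mx; rwa [hmxlen'] at this
        · rw [card_falses]; exact hcfx
      · simp only [hS₁, Finset.mem_filter, Finset.mem_powerset]
        refine ⟨?_, ?_⟩
        · have := falses_subset my; rwa [hmylen'] at this
        · rw [card_falses]; exact hcfy
    · -- decode gives y back
      have hmx_rebuild : (List.range n).map (fun i => ! decide (i ∈ falses mx)) = mx := by
        rw [← hmxlen']; exact mask_of_falses mx
      have hmy_rebuild : (List.range n).map (fun i => ! decide (i ∈ falses my)) = my := by
        rw [← hmylen']; exact mask_of_falses my
      have hcard_fy : (falses my).card = vals.length := by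
        rw [card_falses, hvals_len]
      have hvals_rebuild :
          ((List.ofFn vpad).take (falses my).card).map (fun b => if b then 3 else 2)
            = vals := by
        have hvlh : vals.length ≤ h := by rw [hvals_len]; exact hcfy
        apply List.ext_getElem
        · simp [hcard_fy]; omega
        · intro j hj hj'
          have hjv : j < vals.length := hj'
          have hjh : j < h := lt_of_lt_of_le hjv hvlh
          simp only [List.getElem_map, List.getElem_take, List.getElem_ofFn, hvpad]
          have hgd : vals.getD j 2 = vals[j] := List.getD_eq_getElem vals 2 hjv
          have hmem : vals[j] = 2 ∨ vals[j] = 3 :=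
            hy23 _ (hvals_sub.subset (vals.getElem_mem hjv))
          rcases hmem with h2 | h3
          · simp [List.getD, List.getElem?_eq_getElem hjv, h2]
          · simp [List.getD, List.getElem?_eq_getElem hjv, h3]
      show decodeFn x n h (falses mx, falses my, vpad) = y
      rw [decodeFn]
      simp only
      rw [hmx_rebuild, hmy_rebuild, hmxsel, hvals_rebuild, ← hmysel, hvals]
      exact splice_sel my y (by omega)
  -- cardinality bound
  have hcard1 : Nat.card {y : List ℕ | y.length = 2 * k ∧ (∀ a ∈ y, a = 2 ∨ a = 3) ∧
      levenshtein defaultCost x y ≤ h} ≤ T.card := by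
    calc Nat.card {y : List ℕ | y.length = 2 * k ∧ (∀ a ∈ y, a = 2 ∨ a = 3) ∧
          levenshtein defaultCost x y ≤ h}
        = Set.ncard {y : List ℕ | y.length = 2 * k ∧ (∀ a ∈ y, a = 2 ∨ a = 3) ∧
          levenshtein defaultCost x y ≤ h} := Nat.card_coe_set_eq _
      _ ≤ Set.ncard (↑T : Set (List ℕ)) := Set.ncard_le_ncard hsub T.finite_toSet
      _ = T.card := Set.ncard_coe_finset T
  have hcard2 : T.card ≤ (h + 1) * Nat.choose n h * ((h + 1) * Nat.choose n h * 2 ^ h) := by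
    refine le_trans Finset.card_image_le ?_
    rw [hS, Finset.card_product, Finset.card_product, Finset.card_univ]
    have hchoose := card_small_subsets (k := k) (h := h) hk
    have h2h : (Finset.univ : Finset (Fin h → Bool)).card = 2 ^ h := by
      simp [Fintype.card_fun]
    gcongr <;> simp_all
  refine le_trans hcard1 (le_trans hcard2 ?_)
  have hc3 : 1 ≤ Nat.choose (3 * k) h := Nat.choose_pos (by omega)
  have heq : (h + 1) * Nat.choose n h * ((h + 1) * Nat.choose n h * 2 ^ h)
      = (h + 1) ^ 2 * Nat.choose n h ^ 2 * 1 * 2 ^ h := by ring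
  rw [heq, hn]
  have hp : (h + 1) ^ 2 ≤ (h + 1) ^ 3 := Nat.pow_le_pow_right (Nat.le_add_left 1 h) (by norm_num)
  exact Nat.mul_le_mul (Nat.mul_le_mul (Nat.mul_le_mul hp (le_refl _)) hc3) (le_refl _)
end

section
/- Given a finite sequence (w_1, ..., w_m) of positive real numbers with total sum w, there exists a sequence (a_1, ..., a_m) of binary strings, strictly increasing in the order ≺, such that |a_i| ≤ ⌊log₂ w − log₂ w_i⌋ for all i. -/
/-- The base relations: `s·0·t ≺ s` and `s ≺ s·1·t'`. -/
def PrecBase (a b : List Bool) : Prop :=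
  (∃ s t, a = s ++ false :: t ∧ b = s) ∨ (∃ s t, b = s ++ true :: t ∧ a = s)

/-- The order `≺` on binary strings: the transitive closure of `PrecBase`. -/
def Prec : List Bool → List Bool → Prop :=
  Relation.TransGen PrecBase

/-- Dyadic value of a string (in-order position in (0,1)). -/
noncomputable def val : List Bool → ℝ
  | [] => 1/2
  | false :: s => val s / 2
  | true :: s => (1 + val s) / 2

lemma val_mem : ∀ s, 0 < val s ∧ val s < 1
  | [] => by norm_num [val]
  | false :: s => by
      have h := val_mem s
      constructor <;> simp only [val] <;> linarith [h.1, h.2]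
  | true :: s => by
      have h := val_mem s
      constructor <;> simp only [val] <;> linarith [h.1, h.2]

lemma precBase_cons (c : Bool) {a b : List Bool} (h : PrecBase a b) :
    PrecBase (c :: a) (c :: b) := by
  rcases h with ⟨s, t, ha, hb⟩ | ⟨s, t, hb, ha⟩
  · exact Or.inl ⟨c :: s, t, by simp [ha], hb ▸ rfl⟩
  · exact Or.inr ⟨c :: s, t, by simp [hb], ha ▸ rfl⟩

lemma prec_cons (c : Bool) {a b : List Bool} (h : Prec a b) : Prec (c :: a) (c :: b) := by
  induction h with
  | single h => exact .single (precBase_cons c h)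
  | tail _ h ih => exact .tail ih (precBase_cons c h)

lemma prec_of_val_lt : ∀ a b : List Bool, val a < val b → Prec a b
  | [], [], h => absurd h (lt_irrefl _)
  | [], true :: t, _ => .single (Or.inr ⟨[], t, rfl, rfl⟩)
  | [], false :: t, h => by
      exfalso
      have := (val_mem t).2
      simp only [val] at h; linarith
  | false :: t, [], _ => .single (Or.inl ⟨[], t, rfl, rfl⟩)
  | true :: t, [], h => by
      exfalso
      have := (val_mem t).1
      simp only [val] at h; linarith
  | false :: a, false :: b, h => by
      refine prec_cons _ (prec_of_val_lt a b ?_)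
      simp only [val] at h; linarith
  | true :: a, true :: b, h => by
      refine prec_cons _ (prec_of_val_lt a b ?_)
      simp only [val] at h; linarith
  | false :: a, true :: b, _ =>
      Relation.TransGen.trans
        (.single (Or.inl ⟨[], a, rfl, rfl⟩))
        (.single (Or.inr ⟨[], b, rfl, rfl⟩))
  | true :: a, false :: b, h => by
      exfalso
      have ha := (val_mem a).1
      have hb := (val_mem b).2
      simp only [val] at h; linarith

/-- Encode the dyadic `k / 2^n` (for `0 < k < 2^n`) as a string. -/
def enc : ℕ → ℕ → List Bool
  | 0, _ => []
  | n + 1, k =>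
      if k = 2 ^ n then []
      else if k < 2 ^ n then false :: enc n k
      else true :: enc n (k - 2 ^ n)

lemma enc_spec : ∀ n k, 0 < k → k < 2 ^ n →
    val (enc n k) = (k : ℝ) / 2 ^ n ∧ (enc n k).length + 1 ≤ n
  | 0, k, hk, hk2 => by simp at hk2; omega
  | n + 1, k, hk, hk2 => by
      rcases lt_trichotomy k (2 ^ n) with h | h | h
      · have hn : 1 ≤ n := by
          rcases Nat.eq_zero_or_pos n with rfl | h1
          · simp at h; omega
          · exact h1
        obtain ⟨hv, hl⟩ := enc_spec n k hk h
        rw [enc]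
        rw [if_neg (by omega), if_pos h]
        constructor
        · simp only [val, hv, pow_succ]; ring
        · simp only [List.length_cons]; omega
      · subst h
        rw [enc, if_pos rfl]
        constructor
        · simp only [val]
          rw [pow_succ]
          have : (2 : ℝ) ^ n ≠ 0 := by positivity
          field_simp
          norm_num
        · simp
      · have hk' : 0 < k - 2 ^ n := by omega
        have hk2' : k - 2 ^ n < 2 ^ n := by
          have : 2 ^ (n + 1) = 2 ^ n + 2 ^ n := by ring
          omega
        obtain ⟨hv, hl⟩ := enc_spec n (k - 2 ^ n) hk' hk2'
        rw [enc, if_neg (by omega), if_neg (by omega)]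
        constructor
        · simp only [val, hv]
          have hc : ((k - 2 ^ n : ℕ) : ℝ) = (k : ℝ) - 2 ^ n := by
            push_cast [Nat.cast_sub (by omega : 2 ^ n ≤ k)]; ring
          rw [hc, pow_succ]
          have : (2 : ℝ) ^ n ≠ 0 := by positivity
          field_simp
          ring
        · simp only [List.length_cons]; omega

open Real in
/-- Given positive weights `w_1, …, w_m` summing to `w`, there is a `≺`-increasing
sequence of binary strings with `|a_i| ≤ ⌊log₂ w − log₂ w_i⌋`. -/
theorem stmt11 (m : ℕ) (w : Fin m → ℝ) (hw : ∀ i, 0 < w i) :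
    ∃ a : Fin m → List Bool,
      (∀ i j : Fin m, i < j → Prec (a i) (a j)) ∧
      ∀ i, ((a i).length : ℤ) ≤ ⌊logb 2 (∑ j, w j) - logb 2 (w i)⌋ := by
  rcases Nat.eq_zero_or_pos m with rfl | hm
  · exact ⟨fun i => i.elim0, fun i => i.elim0, fun i => i.elim0⟩
  set W : ℝ := ∑ j, w j with hWdef
  have hW : 0 < W := Finset.sum_pos (fun i _ => hw i) (by
    simpa using Finset.univ_nonempty_iff.2 (Fin.pos_iff_nonempty.mp hm))
  -- basic facts
  have hwle : ∀ i, w i ≤ W := fun i =>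
    Finset.single_le_sum (fun j _ => (hw j).le) (Finset.mem_univ i)
  set z : Fin m → ℝ := fun i => logb 2 W - logb 2 (w i) with hzdef
  have hz0 : ∀ i, 0 ≤ z i := fun i => by
    have := Real.logb_le_logb_of_le (one_lt_two) (hw i) (hwle i)
    simp only [hzdef]; linarith
  have hzeq : ∀ i, z i = logb 2 (W / w i) := fun i => by
    rw [hzdef, Real.logb_div hW.ne' (hw i).ne']
  set ℓ : Fin m → ℕ := fun i => (⌊z i⌋).toNat with hldef
  set n : Fin m → ℕ := fun i => ℓ i + 1 with hndef
  -- 2 ^ n i > W / w i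
  have hpow : ∀ i, W / w i < 2 ^ (n i) := by
    intro i
    have h1 : z i < (n i : ℝ) := by
      have := Int.lt_floor_add_one (z i)
      have h2 : (⌊z i⌋ : ℝ) ≤ ((ℓ i : ℕ) : ℝ) := by
        rw [hldef]
        exact_mod_cast Int.self_le_toNat _
      rw [hndef]; push_cast; linarith
    calc W / w i = (2 : ℝ) ^ (z i) := by
            rw [hzeq i, Real.rpow_logb (by norm_num) (by norm_num)
              (div_pos hW (hw i))]
      _ < (2 : ℝ) ^ ((n i : ℕ) : ℝ) :=
            Real.rpow_lt_rpow_left_iff (by norm_num) |>.2 h1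
      _ = 2 ^ (n i) := by rw [Real.rpow_natCast]
  -- cumulative sums
  set L : Fin m → ℝ := fun i => (∑ j ∈ Finset.Iio i, w j) / W with hLdef
  have hL0 : ∀ i, 0 ≤ L i := fun i =>
    div_nonneg (Finset.sum_nonneg fun j _ => (hw j).le) hW.le
  have hLstep : ∀ i, L i + w i / W ≤ 1 := by
    intro i
    rw [hLdef, ← add_div, div_le_one hW]
    have : (∑ j ∈ Finset.Iio i, w j) + w i = ∑ j ∈ insert i (Finset.Iio i), w j := by
      rw [Finset.sum_insert (by simp)]; ring
    rw [this, hWdef]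
    exact Finset.sum_le_sum_of_subset_of_nonneg (Finset.subset_univ _)
      (fun j _ _ => (hw j).le)
  have hLmono : ∀ i j : Fin m, i < j → L i + w i / W ≤ L j := by
    intro i j hij
    simp only [hLdef]
    rw [← add_div, div_le_div_iff_of_pos_right hW]
    have : (∑ k ∈ Finset.Iio i, w k) + w i = ∑ k ∈ insert i (Finset.Iio i), w k := by
      rw [Finset.sum_insert (by simp)]; ring
    rw [this]
    refine Finset.sum_le_sum_of_subset_of_nonneg ?_ (fun k _ _ => (hw k).le)
    intro k hk
    simp only [Finset.mem_insert, Finset.mem_Iio] at hk ⊢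
    rcases hk with rfl | hk
    · exact hij
    · exact hk.trans hij
  -- interval length bound: 1 / 2 ^ n i < w i / W
  have hlen : ∀ i, (1 : ℝ) / 2 ^ (n i) < w i / W := by
    intro i
    rw [div_lt_div_iff₀ (by positivity) hW]
    have h := hpow i
    rw [div_lt_iff₀ (hw i)] at h
    nlinarith [hw i, (by positivity : (0:ℝ) < 2 ^ (n i))]
  -- the chosen numerators
  set k : Fin m → ℕ := fun i => (⌊L i * 2 ^ (n i)⌋).toNat + 1 with hkdef
  have hkcast : ∀ i, ((k i : ℝ)) = (⌊L i * 2 ^ (n i)⌋ : ℝ) + 1 := by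
    intro i
    have h0 : (0:ℤ) ≤ ⌊L i * 2 ^ (n i)⌋ :=
      Int.floor_nonneg.2 (mul_nonneg (hL0 i) (by positivity))
    have h1 : ((⌊L i * 2 ^ (n i)⌋.toNat : ℕ) : ℝ) = ((⌊L i * 2 ^ (n i)⌋ : ℤ) : ℝ) := by
      exact_mod_cast Int.toNat_of_nonneg h0
    simp only [hkdef, Nat.cast_add, Nat.cast_one, h1]
  set x : Fin m → ℝ := fun i => (k i : ℝ) / 2 ^ (n i) with hxdef
  have hxgt : ∀ i, L i < x i := by
    intro i
    rw [hxdef, lt_div_iff₀ (by positivity), hkcast]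
    have := Int.lt_floor_add_one (L i * 2 ^ (n i))
    linarith
  have hxlt : ∀ i, x i < L i + w i / W := by
    intro i
    rw [hxdef, div_lt_iff₀ (by positivity : (0:ℝ) < 2 ^ (n i)), hkcast]
    have h1 := Int.floor_le (L i * 2 ^ (n i))
    have h3 : (0:ℝ) < 2 ^ (n i) := by positivity
    have h4 : (1:ℝ) < w i / W * 2 ^ (n i) := (div_lt_iff₀ h3).mp (hlen i)
    nlinarith
  have hx1 : ∀ i, x i < 1 := fun i => lt_of_lt_of_le (hxlt i) (hLstep i)
  have hk0 : ∀ i, 0 < k i := fun i => Nat.succ_pos _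
  have hklt : ∀ i, k i < 2 ^ (n i) := by
    intro i
    have := hx1 i
    rw [hxdef, div_lt_one (by positivity)] at this
    exact_mod_cast this
  refine ⟨fun i => enc (n i) (k i), ?_, ?_⟩
  · intro i j hij
    obtain ⟨hvi, -⟩ := enc_spec (n i) (k i) (hk0 i) (hklt i)
    obtain ⟨hvj, -⟩ := enc_spec (n j) (k j) (hk0 j) (hklt j)
    apply prec_of_val_lt
    rw [hvi, hvj]
    calc (k i : ℝ) / 2 ^ (n i) < L i + w i / W := hxlt i
      _ ≤ L j := hLmono i j hij
      _ < (k j : ℝ) / 2 ^ (n j) := hxgt j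
  · intro i
    obtain ⟨-, hl⟩ := enc_spec (n i) (k i) (hk0 i) (hklt i)
    have hn : n i = ℓ i + 1 := rfl
    have h1 : (enc (n i) (k i)).length ≤ ℓ i := by omega
    have h2 : ((ℓ i : ℕ) : ℤ) = ⌊z i⌋ := Int.toNat_of_nonneg (Int.floor_nonneg.2 (hz0 i))
    calc ((enc (n i) (k i)).length : ℤ) ≤ ((ℓ i : ℕ) : ℤ) := by exact_mod_cast h1
      _ = ⌊z i⌋ := h2
end

section
/- There is an injective encoding of lists a = (a_0, ..., a_{2k}) of binary strings satisfying a_{2i}·a_{2i+1} ≠ ε for all i < k into binary strings, such that the encoding of a has length exactly 3t where t = |a_0·...·a_{2k}|, for every t and k (with the encoding map injective across all such lists, including different t and k). -/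
/-- Lists `(a_0, …, a_{2k})` of binary strings with `a_{2i} ++ a_{2i+1} ≠ []`
for all `i < k`. -/
def GoodList (a : List (List Bool)) : Prop :=
  a.length % 2 = 1 ∧
    ∀ i, 2 * i + 2 ≤ a.length → a.getD (2 * i) [] ++ a.getD (2 * i + 1) [] ≠ []

/-- Binary digits of `s`, in `n` bits. -/
def sBits (s n : ℕ) : List Bool := (List.range n).map (fun i => s.testBit i)

lemma sBits_length (s n : ℕ) : (sBits s n).length = n := by simp [sBits]

lemma sBits_inj {s s' n : ℕ} (hs : s ≤ n) (hs' : s' ≤ n)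
    (h : sBits s n = sBits s' n) : s = s' := by
  apply Nat.eq_of_testBit_eq
  intro i
  by_cases hi : i < n
  · have := congrArg (fun l => l.getD i false) h
    simpa [sBits, hi] using this
  · push_neg at hi
    have h1 : s.testBit i = false :=
      Nat.testBit_eq_false_of_lt (lt_of_le_of_lt (hs.trans hi) (Nat.lt_two_pow_self (n := i)))
    have h2 : s'.testBit i = false :=
      Nat.testBit_eq_false_of_lt (lt_of_le_of_lt (hs'.trans hi) (Nat.lt_two_pow_self (n := i)))
    rw [h1, h2]

/-- Self-delimiting code of a pair `(x0, x1)` with `n = |x0|+|x1| ≥ 1`: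
unary header giving `n`, then binary of the split position, then content. -/
def pairCode (x0 x1 : List Bool) : List Bool :=
  List.replicate (x0.length + x1.length - 1) true ++ [false] ++
    sBits x0.length (x0.length + x1.length) ++ (x0 ++ x1)

/-- Terminal code for the last string. -/
def lastCode (x : List Bool) : List Bool :=
  List.replicate x.length true ++ x ++ List.replicate x.length false

/-- The encoding. -/
def E : List (List Bool) → List Bool
  | [] => []
  | [x] => lastCode x
  | x0 :: x1 :: rest => pairCode x0 x1 ++ E rest

lemma lastCode_length (x : List Bool) : (lastCode x).length = 3 * x.length := by
  simp [lastCode]; ring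

lemma len_pos_of_append_ne_nil {x0 x1 : List Bool} (h : x0 ++ x1 ≠ []) :
    1 ≤ x0.length + x1.length := by
  rcases Nat.eq_zero_or_pos (x0.length + x1.length) with h0 | h0
  · exact absurd (List.eq_nil_of_length_eq_zero (by rw [List.length_append]; omega)) h
  · exact h0

lemma pairCode_length (x0 x1 : List Bool) (h : x0 ++ x1 ≠ []) :
    (pairCode x0 x1).length = 3 * (x0.length + x1.length) := by
  have := len_pos_of_append_ne_nil h
  simp [pairCode, sBits_length]
  omega

lemma good_nil : ¬ GoodList [] := by
  intro h
  simpa using h.1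

lemma good_cons_cons {x0 x1 : List Bool} {rest : List (List Bool)} :
    GoodList (x0 :: x1 :: rest) ↔ (x0 ++ x1 ≠ [] ∧ GoodList rest) := by
  constructor
  · rintro ⟨hlen, hcond⟩
    refine ⟨?_, ?_, ?_⟩
    · have := hcond 0 (by simp)
      simpa using this
    · simp at hlen; omega
    · intro j hj
      have := hcond (j + 1) (by simp; omega)
      rw [show 2 * (j + 1) = 2 * j + 1 + 1 by ring] at this
      simpa only [List.getD_cons_succ] using this
  · rintro ⟨hne, hlen, hcond⟩
    refine ⟨by simp; omega, ?_⟩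
    intro i hi
    cases i with
    | zero => simpa using hne
    | succ j =>
      rw [show 2 * (j + 1) = 2 * j + 1 + 1 by ring]
      simp only [List.getD_cons_succ]
      apply hcond
      simp at hi; omega

lemma Elen : ∀ a, GoodList a → (E a).length = 3 * (a.map List.length).sum
  | [], h => absurd h good_nil
  | [x], _ => by simp [E, lastCode_length]
  | x0 :: x1 :: rest, h => by
      obtain ⟨hne, hg⟩ := good_cons_cons.mp h
      have ih := Elen rest hg
      simp [E, pairCode_length x0 x1 hne, ih]
      ring

/-- "Unary header" reading. -/
def U (w : List Bool) : ℕ := (w.takeWhile id).length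

lemma takeWhile_rep (k : ℕ) (l : List Bool) :
    List.takeWhile id (List.replicate k true ++ l) =
      List.replicate k true ++ List.takeWhile id l := by
  induction k with
  | zero => simp
  | succ k ih => simp [List.replicate_succ, List.takeWhile_cons, ih]

lemma U_pair (x0 x1 : List Bool) (w : List Bool) :
    U (pairCode x0 x1 ++ w) = x0.length + x1.length - 1 := by
  have : pairCode x0 x1 ++ w =
      List.replicate (x0.length + x1.length - 1) true ++
        (false :: (sBits x0.length (x0.length + x1.length) ++ (x0 ++ x1) ++ w)) := by
    simp [pairCode]
  rw [this, U, takeWhile_rep]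
  simp

lemma U_last (x : List Bool) : x.length ≤ U (lastCode x) := by
  rw [lastCode, List.append_assoc, U, takeWhile_rep]
  simp

lemma Einj : ∀ a b, GoodList a → GoodList b → E a = E b → a = b
  | [], _, ha, _, _ => absurd ha good_nil
  | _ :: _, [], _, hb, _ => absurd hb good_nil
  | [x], [y], _, _, h => by
      have hlen : (lastCode x).length = (lastCode y).length := by
        rw [show lastCode x = E [x] from rfl, show lastCode y = E [y] from rfl, h]
      rw [lastCode_length, lastCode_length] at hlen
      have hxy : x.length = y.length := by omega
      replace h : lastCode x = lastCode y := h
      unfold lastCode at h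
      rw [hxy, List.append_assoc, List.append_assoc] at h
      have h1 := List.append_cancel_left h
      have h2 := (List.append_inj h1 hxy).1
      rw [h2]
  | [x], y0 :: y1 :: rest, _, hb, h => by
      exfalso
      obtain ⟨hne, _⟩ := good_cons_cons.mp hb
      have hn := len_pos_of_append_ne_nil hne
      have hlen : (E [x]).length = (E (y0 :: y1 :: rest)).length := by rw [h]
      have hE : E (y0 :: y1 :: rest) = pairCode y0 y1 ++ E rest := rfl
      rw [show E [x] = lastCode x from rfl, hE] at hlen h
      rw [List.length_append, lastCode_length, pairCode_length y0 y1 hne] at hlen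
      have hU : U (lastCode x) = U (pairCode y0 y1 ++ E rest) := by rw [h]
      rw [U_pair] at hU
      have := U_last x
      omega
  | y0 :: y1 :: rest, [x], ha, hb, h =>
      (Einj [x] (y0 :: y1 :: rest) hb ha h.symm).symm
  | x0 :: x1 :: rest, y0 :: y1 :: rest', ha, hb, h => by
      obtain ⟨hnea, hga⟩ := good_cons_cons.mp ha
      obtain ⟨hneb, hgb⟩ := good_cons_cons.mp hb
      have hna := len_pos_of_append_ne_nil hnea
      have hnb := len_pos_of_append_ne_nil hneb
      have hE : pairCode x0 x1 ++ E rest = pairCode y0 y1 ++ E rest' := h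
      have hU : U (pairCode x0 x1 ++ E rest) = U (pairCode y0 y1 ++ E rest') := by rw [hE]
      rw [U_pair, U_pair] at hU
      have hn : x0.length + x1.length = y0.length + y1.length := by omega
      have hlen : (pairCode x0 x1).length = (pairCode y0 y1).length := by
        rw [pairCode_length x0 x1 hnea, pairCode_length y0 y1 hneb, hn]
      obtain ⟨hp, hrest⟩ := List.append_inj hE hlen
      rw [pairCode, pairCode, hn] at hp
      simp only [List.append_assoc, List.cons_append, List.nil_append] at hp
      have hp1 := List.append_cancel_left hp
      have hp2 : sBits x0.length (y0.length + y1.length) ++ (x0 ++ x1) =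
          sBits y0.length (y0.length + y1.length) ++ (y0 ++ y1) := by
        injection hp1
      obtain ⟨hsb, hcontent⟩ := List.append_inj hp2 (by rw [sBits_length, sBits_length])
      have hs : x0.length = y0.length := sBits_inj (by omega) (by omega) hsb
      have hx0 : x0 = y0 := by
        have t1 : (x0 ++ x1).take x0.length = x0 := List.take_left
        have t2 : (y0 ++ y1).take y0.length = y0 := List.take_left
        rw [← t1, ← t2, hcontent, hs]
      have hx1 : x1 = y1 := by
        have t1 : (x0 ++ x1).drop x0.length = x1 := List.drop_left
        have t2 : (y0 ++ y1).drop y0.length = y1 := List.drop_left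
        rw [← t1, ← t2, hcontent, hs]
      have hr : rest = rest' := Einj rest rest' hga hgb hrest
      rw [hx0, hx1, hr]
termination_by a b ha hb h => a.length
decreasing_by all_goals (simp_wf; try omega)

/-- There is an injective encoding of such lists into binary strings of length
exactly `3t`, where `t` is the total length of the strings in the list. -/
theorem stmt16 :
    ∃ E : List (List Bool) → List Bool,
      Set.InjOn E {a | GoodList a} ∧
      ∀ a, GoodList a → (E a).length = 3 * (a.map List.length).sum := by
  refine ⟨E, ?_, Elen⟩
  intro a ha b hb h
  exact Einj a b ha hb h
end

section
/- Any list a = (a_0, ..., a_{2k}) of binary strings with a_{2i}·a_{2i+1} ≠ ε for all i < k and |a_0·...·a_{2k}| = t can be injectively encoded as a binary string of length exactly ⌈(1 + log₂(2+√2))·t⌉; i.e., the number of such lists for fixed t is at most 2^t·(2+√2)^t ≤ 2^{⌈(1+log₂(2+√2))t⌉}. -/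
namespace Stmt17

/-- total weight -/
def wt (a : List (List Bool)) : ℕ := (a.map List.length).sum

lemma wt_cons (u v : List Bool) (rest : List (List Bool)) :
    wt (u :: v :: rest) = u.length + v.length + wt rest := by
  simp [wt]; ring

/-- binary value of a string -/
def val : List Bool → ℕ
  | [] => 0
  | b :: l => (if b then 1 else 0) + 2 * val l

lemma val_lt (l : List Bool) : val l < 2 ^ l.length := by
  induction l with
  | nil => simp [val]
  | cons b l ih => simp only [val, List.length_cons, pow_succ]; cases b <;> simp <;> omega

lemma val_inj : ∀ {u v : List Bool}, u.length = v.length → val u = val v → u = v := by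
  intro u
  induction u with
  | nil => intro v h _; cases v; rfl; simp at h
  | cons b l ih =>
    intro v h hv
    cases v with
    | nil => simp at h
    | cons c m =>
      simp only [List.length_cons, Nat.add_right_cancel_iff] at h
      simp only [val] at hv
      have hbc : b = c ∧ val l = val m := by cases b <;> cases c <;> simp at hv ⊢ <;> omega
      rw [hbc.1, ih h hbc.2]

noncomputable def rr : ℝ := 4 + 2 * Real.sqrt 2

lemma sqrt2_sq : Real.sqrt 2 * Real.sqrt 2 = 2 := Real.mul_self_sqrt (by norm_num)
lemma sqrt2_gt : (1:ℝ) < Real.sqrt 2 := by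
  nlinarith [sqrt2_sq, Real.sqrt_nonneg 2]

lemma rr_pos : (0:ℝ) < rr := by unfold rr; nlinarith [Real.sqrt_nonneg 2]

noncomputable def B (t : ℕ) : ℕ := ⌊rr ^ t⌋₊

/-- key generating-function identity -/
lemma sumId (t : ℕ) :
    ∑ m ∈ Finset.Ico 1 (t+1), ((m:ℝ)+1) * 2^m * rr^(t-m)
      = rr^t - 2^t - (Real.sqrt 2 - 1) * t * 2^t := by
  induction t with
  | zero => simp
  | succ t ih =>
    rw [Finset.sum_Ico_succ_top (by omega)]
    have key : ∑ m ∈ Finset.Ico 1 (t+1), ((m:ℝ)+1) * 2^m * rr^(t+1-m)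
        = rr * ∑ m ∈ Finset.Ico 1 (t+1), ((m:ℝ)+1) * 2^m * rr^(t-m) := by
      rw [Finset.mul_sum]
      refine Finset.sum_congr rfl ?_
      intro m hm
      rw [Finset.mem_Ico] at hm
      have h1 : t + 1 - m = (t - m) + 1 := by omega
      rw [h1, pow_succ]
      ring
    rw [key, ih]
    simp only [Nat.sub_self, pow_zero, Nat.cast_add, Nat.cast_one, mul_one]
    unfold rr
    rw [pow_succ, pow_succ]
    linear_combination (-2 * (t:ℝ) * 2^t) * sqrt2_sq

lemma floor_le_rpow (s : ℕ) : (B s : ℝ) ≤ rr ^ s :=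
  Nat.floor_le (le_of_lt (pow_pos rr_pos s))

/-- key counting bound -/
lemma bkey (t : ℕ) :
    2^t + ∑ m ∈ Finset.Ico 1 (t+1), (m+1) * 2^m * B (t-m) ≤ B t := by
  apply Nat.le_floor
  push_cast
  have h1 : ∑ m ∈ Finset.Ico 1 (t+1), ((m:ℝ)+1) * 2^m * (B (t-m) : ℝ)
      ≤ ∑ m ∈ Finset.Ico 1 (t+1), ((m:ℝ)+1) * 2^m * rr^(t-m) := by
    refine Finset.sum_le_sum ?_
    intro m _
    have := floor_le_rpow (t - m)
    have h2 : (0:ℝ) ≤ ((m:ℝ)+1) * 2^m := by positivity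
    nlinarith
  rw [sumId] at h1
  have h3 : (0:ℝ) ≤ (Real.sqrt 2 - 1) * t * 2^t := by
    have h4 : (0:ℝ) ≤ Real.sqrt 2 - 1 := by linarith [sqrt2_gt]
    exact mul_nonneg (mul_nonneg h4 (Nat.cast_nonneg t)) (by positivity)
  calc (2:ℝ)^t + ∑ m ∈ Finset.Ico 1 (t+1), ((m:ℝ)+1) * 2^m * (B (t-m) : ℝ)
      ≤ 2^t + (rr^t - 2^t - (Real.sqrt 2 - 1) * t * 2^t) := by linarith
    _ ≤ rr^t := by linarith

lemma two_pow_le_B (t : ℕ) : 2^t ≤ B t := le_trans (Nat.le_add_right _ _) (bkey t)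

noncomputable def N : List (List Bool) → ℕ
  | [] => 0
  | [w] => val w
  | u :: v :: rest =>
      2 ^ (u.length + v.length + wt rest) +
      (∑ m ∈ Finset.Ico 1 (u.length + v.length), (m+1) * 2^m *
        B (u.length + v.length + wt rest - m)) +
      (u.length * 2 ^ (u.length + v.length) + val (u ++ v)) * B (wt rest) + N rest

lemma good_cons {u v : List Bool} {rest : List (List Bool)}
    (h : GoodList (u :: v :: rest)) : GoodList rest := by
  obtain ⟨hpar, hcon⟩ := h
  constructor
  · simp only [List.length_cons] at hpar ⊢; omega
  · intro i hi
    have := hcon (i+1) (by simp only [List.length_cons]; omega)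
    have e1 : 2 * (i+1) = 2*i + 1 + 1 := by ring
    rw [e1] at this
    simp only [List.getD_cons_succ] at this
    exact this

lemma good_pair {u v : List Bool} {rest : List (List Bool)}
    (h : GoodList (u :: v :: rest)) : 1 ≤ u.length + v.length := by
  have h2 := h.2 0 (by simp only [List.length_cons]; omega)
  rcases Nat.eq_zero_or_pos (u.length + v.length) with h0 | h0
  · exfalso
    have hu : u = [] := List.length_eq_zero_iff.1 (by omega)
    have hv : v = [] := List.length_eq_zero_iff.1 (by omega)
    apply h2
    simp [hu, hv, List.getD]
  · exact h0


noncomputable def Sg (t j : ℕ) : ℕ := ∑ m ∈ Finset.Ico 1 j, (m+1) * 2^m * B (t-m)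

lemma N_cons_eq (u v : List Bool) (rest : List (List Bool)) :
    N (u :: v :: rest) =
      2 ^ wt (u :: v :: rest) + Sg (wt (u :: v :: rest)) (u.length + v.length) +
      (u.length * 2 ^ (u.length + v.length) + val (u ++ v)) * B (wt rest) + N rest := by
  rw [wt_cons]; rfl

lemma idx_lt (u v : List Bool) :
    u.length * 2 ^ (u.length + v.length) + val (u ++ v) + 1
      ≤ (u.length + v.length + 1) * 2 ^ (u.length + v.length) := by
  have h1 : val (u ++ v) < 2 ^ (u.length + v.length) := by
    have := val_lt (u ++ v)
    rwa [List.length_append] at this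
  have h2 : u.length * 2 ^ (u.length + v.length)
      ≤ (u.length + v.length) * 2 ^ (u.length + v.length) :=
    Nat.mul_le_mul_right _ (by omega)
  nlinarith

lemma cons_ub {u v : List Bool} {rest : List (List Bool)}
    (hg : GoodList (u :: v :: rest)) (hrest : N rest < B (wt rest)) :
    N (u :: v :: rest) <
      2 ^ wt (u :: v :: rest) + Sg (wt (u :: v :: rest)) (u.length + v.length + 1) := by
  have hwr : wt (u :: v :: rest) - (u.length + v.length) = wt rest := by
    rw [wt_cons]; omega
  have hstep : Sg (wt (u :: v :: rest)) (u.length + v.length + 1)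
      = Sg (wt (u :: v :: rest)) (u.length + v.length) +
        (u.length + v.length + 1) * 2 ^ (u.length + v.length) * B (wt rest) := by
    unfold Sg
    rw [Finset.sum_Ico_succ_top (good_pair hg), hwr]
  rw [N_cons_eq, hstep]
  have h3 : (u.length * 2 ^ (u.length + v.length) + val (u ++ v)) * B (wt rest) + N rest
      < (u.length + v.length + 1) * 2 ^ (u.length + v.length) * B (wt rest) := by
    calc (u.length * 2 ^ (u.length + v.length) + val (u ++ v)) * B (wt rest) + N rest
        < (u.length * 2 ^ (u.length + v.length) + val (u ++ v)) * B (wt rest)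
            + B (wt rest) := by omega
      _ = (u.length * 2 ^ (u.length + v.length) + val (u ++ v) + 1) * B (wt rest) := by ring
      _ ≤ (u.length + v.length + 1) * 2 ^ (u.length + v.length) * B (wt rest) :=
          Nat.mul_le_mul_right _ (idx_lt u v)
  have h4 := N_cons_eq u v rest
  linarith

lemma cons_lb (u v : List Bool) (rest : List (List Bool)) :
    2 ^ wt (u :: v :: rest) + Sg (wt (u :: v :: rest)) (u.length + v.length)
      ≤ N (u :: v :: rest) := by
  rw [N_cons_eq]; omega

lemma Sg_mono (t : ℕ) {j j' : ℕ} (h : j ≤ j') : Sg t j ≤ Sg t j' :=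
  Finset.sum_le_sum_of_subset (Finset.Ico_subset_Ico le_rfl h)

lemma N_lt : ∀ (n : ℕ) (a : List (List Bool)), a.length ≤ n → GoodList a → N a < B (wt a) := by
  intro n
  induction n with
  | zero =>
    intro a ha hg
    have : a = [] := List.length_eq_zero_iff.1 (by omega)
    subst this
    simp [GoodList] at hg
  | succ n ih =>
    intro a ha hg
    match a with
    | [] => simp [GoodList] at hg
    | [w] =>
      have : N [w] = val w := rfl
      rw [this]
      have h1 : wt [w] = w.length := by simp [wt]
      rw [h1]
      exact lt_of_lt_of_le (val_lt w) (two_pow_le_B _)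
    | u :: v :: rest =>
      have hrest : N rest < B (wt rest) :=
        ih rest (by simp at ha; omega) (good_cons hg)
      have h1 := cons_ub hg hrest
      set m := u.length + v.length
      set t := wt (u :: v :: rest) with ht
      have hmt : m ≤ t := by rw [ht, wt_cons]; omega
      have h2 : Sg t (m+1) ≤ Sg t (t+1) := Sg_mono t (by omega)
      have h3 := bkey t
      have h4 : Sg t (t+1) = ∑ m ∈ Finset.Ico 1 (t+1), (m+1) * 2^m * B (t-m) := rfl
      omega

lemma mul_add_inj {b x₁ x₂ y₁ y₂ : ℕ} (h₁ : y₁ < b) (h₂ : y₂ < b)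
    (h : x₁ * b + y₁ = x₂ * b + y₂) : x₁ = x₂ ∧ y₁ = y₂ := by
  have key : ∀ {p q r s : ℕ}, r < b → p < q → p * b + r < q * b + s := by
    intro p q r s hr hpq
    have : (p+1) * b ≤ q * b := Nat.mul_le_mul_right _ (by omega)
    nlinarith
  rcases lt_trichotomy x₁ x₂ with hlt | he | hgt
  · exact absurd h (Nat.ne_of_lt (key h₁ hlt))
  · subst he; omega
  · exact absurd h.symm (Nat.ne_of_lt (key h₂ hgt))

lemma take_drop_eq {u v u' v' : List Bool} (hl : u.length = u'.length)
    (h : u ++ v = u' ++ v') : u = u' ∧ v = v' := by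
  constructor
  · have := congrArg (fun l => l.take u.length) h
    simpa [List.take_left, hl, List.take_left'] using this
  · have := congrArg (fun l => l.drop u.length) h
    simpa [List.drop_left, hl, List.drop_left'] using this

lemma N_inj : ∀ (n : ℕ) (a b : List (List Bool)), a.length ≤ n →
    GoodList a → GoodList b → wt a = wt b → N a = N b → a = b := by
  intro n
  induction n with
  | zero =>
    intro a b ha hga hgb hw hN
    have : a = [] := List.length_eq_zero_iff.1 (by omega)
    subst this
    simp [GoodList] at hga
  | succ n ih =>
    intro a b ha hga hgb hw hN
    have lt_sc : ∀ (w : List Bool) (u v : List Bool) (rest : List (List Bool)),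
        wt [w] = wt (u :: v :: rest) → N [w] < N (u :: v :: rest) := by
      intro w u v rest hww
      have h1 : N [w] = val w := rfl
      have h2 : val w < 2 ^ wt [w] := by
        have : wt [w] = w.length := by simp [wt]
        rw [this]; exact val_lt w
      calc N [w] < 2 ^ wt [w] := by rw [h1]; exact h2
        _ = 2 ^ wt (u :: v :: rest) := by rw [hww]
        _ ≤ N (u :: v :: rest) := le_trans (Nat.le_add_right _ _) (cons_lb u v rest)
    match a, b with
    | [], _ => simp [GoodList] at hga
    | _, [] => simp [GoodList] at hgb
    | [w], [w'] =>
      have hlw : w.length = w'.length := by simpa [wt] using hw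
      have hv : val w = val w' := hN
      rw [val_inj hlw hv]
    | [w], u :: v :: rest =>
      exact absurd hN (Nat.ne_of_lt (lt_sc w u v rest hw))
    | u :: v :: rest, [w] =>
      exact absurd hN.symm (Nat.ne_of_lt (lt_sc w u v rest hw.symm))
    | u :: v :: rest, u' :: v' :: rest' =>
      have hga' := good_cons hga
      have hgb' := good_cons hgb
      have hna : N rest < B (wt rest) := N_lt rest.length rest le_rfl hga'
      have hnb : N rest' < B (wt rest') := N_lt rest'.length rest' le_rfl hgb'
      have hub_a := cons_ub hga hna
      have hub_b := cons_ub hgb hnb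
      have hlb_a := cons_lb u v rest
      have hlb_b := cons_lb u' v' rest'
      rw [← hw] at hub_b hlb_b
      -- the pair-weights agree
      have hm : u.length + v.length = u'.length + v'.length := by
        rcases lt_trichotomy (u.length + v.length) (u'.length + v'.length) with hlt | he | hgt
        · exfalso
          have h5 := Sg_mono (wt (u :: v :: rest))
            (show u.length + v.length + 1 ≤ u'.length + v'.length by omega)
          omega
        · exact he
        · exfalso
          have h5 := Sg_mono (wt (u :: v :: rest))
            (show u'.length + v'.length + 1 ≤ u.length + v.length by omega)
          omega
      have hwr : wt rest = wt rest' := by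
        rw [wt_cons, wt_cons] at hw
        omega
      have e := hN
      rw [N_cons_eq, N_cons_eq, ← hw, ← hwr, ← hm] at e
      have e2 : (u.length * 2 ^ (u.length + v.length) + val (u ++ v)) * B (wt rest) + N rest
          = (u'.length * 2 ^ (u.length + v.length) + val (u' ++ v')) * B (wt rest)
            + N rest' := by linarith
      have e3 := mul_add_inj hna (hwr ▸ hnb) e2
      have hva : val (u ++ v) < 2 ^ (u.length + v.length) := by
        have := val_lt (u ++ v); rwa [List.length_append] at this
      have hvb : val (u' ++ v') < 2 ^ (u.length + v.length) := by
        have := val_lt (u' ++ v'); rw [List.length_append] at this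
        rwa [← hm] at this
      have e4 := mul_add_inj hva hvb e3.1
      have e5 : u ++ v = u' ++ v' := by
        apply val_inj _ e4.2
        rw [List.length_append, List.length_append]
        exact hm
      obtain ⟨hu, hv⟩ := take_drop_eq e4.1 e5
      have hr : rest = rest' := by
        apply ih rest rest' _ hga' hgb' hwr e3.2
        simp only [List.length_cons] at ha
        omega
      rw [hu, hv, hr]

noncomputable def LL (t : ℕ) : ℕ := ⌈(1 + Real.logb 2 (2 + Real.sqrt 2)) * t⌉₊

lemma sqrt2_add_pos : (0:ℝ) < 2 + Real.sqrt 2 := by positivity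

lemma rpow_bound (t : ℕ) : rr ^ t ≤ (2:ℝ) ^ (LL t) := by
  have hx : (2:ℝ) + Real.sqrt 2 = 2 ^ (Real.logb 2 (2 + Real.sqrt 2)) :=
    (Real.rpow_logb (by norm_num) (by norm_num) sqrt2_add_pos).symm
  have h1 : rr ^ t = (2:ℝ) ^ ((1 + Real.logb 2 (2 + Real.sqrt 2)) * t) := by
    have hr : rr = 2 * (2 + Real.sqrt 2) := by unfold rr; ring
    rw [hr, mul_pow]
    conv_lhs => rw [hx]
    rw [← Real.rpow_natCast ((2:ℝ) ^ (Real.logb 2 (2 + Real.sqrt 2))) t,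
      ← Real.rpow_natCast (2:ℝ) t, ← Real.rpow_mul (by norm_num),
      ← Real.rpow_add (by norm_num)]
    congr 1
    ring
  rw [h1, ← Real.rpow_natCast (2:ℝ) (LL t)]
  apply Real.rpow_le_rpow_of_exponent_le one_le_two
  exact Nat.le_ceil _

lemma B_le_pow (t : ℕ) : B t ≤ 2 ^ LL t := by
  have h1 : (B t : ℝ) ≤ (2:ℝ) ^ (LL t) := le_trans (floor_le_rpow t) (rpow_bound t)
  exact_mod_cast h1

lemma logb_nn : 0 ≤ Real.logb 2 (2 + Real.sqrt 2) :=
  Real.logb_nonneg one_lt_two (by nlinarith [Real.sqrt_nonneg 2])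

lemma LL_strictMono : StrictMono LL := by
  intro t t' h
  have hc : (1:ℝ) ≤ 1 + Real.logb 2 (2 + Real.sqrt 2) := by linarith [logb_nn]
  have hLL : LL t' = ⌈(1 + Real.logb 2 (2 + Real.sqrt 2)) * (t' : ℝ)⌉₊ := rfl
  rw [hLL, Nat.lt_ceil]
  calc (LL t : ℝ) < (1 + Real.logb 2 (2 + Real.sqrt 2)) * t + 1 := by
        exact_mod_cast Nat.ceil_lt_add_one (by positivity)
    _ ≤ (1 + Real.logb 2 (2 + Real.sqrt 2)) * (t + 1) := by nlinarith
    _ ≤ (1 + Real.logb 2 (2 + Real.sqrt 2)) * t' := by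
        have ht' : (t:ℝ) + 1 ≤ (t':ℝ) := by exact_mod_cast h
        nlinarith

noncomputable def Enc (a : List (List Bool)) : List Bool :=
  (List.range (LL (wt a))).map (fun i => (N a).testBit i)

lemma Enc_inj : Set.InjOn Enc {a | GoodList a} := by
  intro a ha b hb h
  have hlen : LL (wt a) = LL (wt b) := by
    have := congrArg List.length h
    simpa [Enc] using this
  have hwt : wt a = wt b := LL_strictMono.injective hlen
  have hNa : N a < 2 ^ LL (wt a) :=
    lt_of_lt_of_le (N_lt a.length a le_rfl ha) (B_le_pow _)
  have hNb : N b < 2 ^ LL (wt b) :=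
    lt_of_lt_of_le (N_lt b.length b le_rfl hb) (B_le_pow _)
  have hN : N a = N b := by
    apply Nat.eq_of_testBit_eq
    intro i
    by_cases hi : i < LL (wt a)
    · have h2 : (List.range (LL (wt a))).map (fun i => (N a).testBit i)
          = (List.range (LL (wt a))).map (fun i => (N b).testBit i) := by
        rw [Enc, Enc, ← hwt] at h
        exact h
      rw [List.map_inj_left] at h2
      exact h2 i (List.mem_range.2 hi)
    · push_neg at hi
      rw [Nat.testBit_lt_two_pow, Nat.testBit_lt_two_pow]
      · exact lt_of_lt_of_le hNb (by rw [← hwt]; exact Nat.pow_le_pow_right (by norm_num) hi)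
      · exact lt_of_lt_of_le hNa (Nat.pow_le_pow_right (by norm_num) hi)
  exact N_inj a.length a b le_rfl ha hb hwt hN

end Stmt17

open Real in
/-- There is an injective encoding of such lists into binary strings of length
exactly `⌈(1 + log₂(2+√2))·t⌉`, where `t` is the total length of the strings in
the list. -/
theorem stmt17 :
    ∃ E : List (List Bool) → List Bool,
      Set.InjOn E {a | GoodList a} ∧
      ∀ a, GoodList a →
        (E a).length =
          ⌈(1 + logb 2 (2 + Real.sqrt 2)) * ((a.map List.length).sum : ℝ)⌉₊ := by
  refine ⟨Stmt17.Enc, Stmt17.Enc_inj, ?_⟩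
  intro a _
  simp [Stmt17.Enc, Stmt17.LL, Stmt17.wt]
end

section
/- In a tree labeled via heavy-light decomposition where each heavy label satisfies |hlabel(v)| ≤ ⌊log₂ size(apex(v)) − log₂ lsize(v)⌋ and each light label satisfies |llabel(v)| ≤ ⌊log₂ lsize(parent(v)) − log₂ size(v)⌋, the concatenation of sub-labels along any root-to-node path has total length at most ⌊log₂ n⌋: the telescoping sum ⌊log₂ a_0 − log₂ b_0⌋ + ⌊log₂ b_0 − log₂ a_1⌋ + ... + ⌊log₂ a_k − log₂ b_k⌋ ≤ ⌊log₂ a_0 − log₂ b_k⌋ holds for any positive reals a_0 ≥ b_0 ≥ a_1 ≥ ... ≥ a_k ≥ b_k with a_0 ≤ n and b_k ≥ 1. -/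
open Real in
/-- Telescoping floors of logs: for positive reals `x_0 ≥ x_1 ≥ … ≥ x_m`,
`Σ_{i<m} ⌊log₂ x_i − log₂ x_{i+1}⌋ ≤ ⌊log₂ x_0 − log₂ x_m⌋`. -/
theorem stmt19 (m : ℕ) (x : ℕ → ℝ) (hpos : ∀ i ≤ m, 0 < x i)
    (hmono : ∀ i < m, x (i + 1) ≤ x i) :
    ∑ i ∈ Finset.range m, ⌊logb 2 (x i) - logb 2 (x (i + 1))⌋ ≤
      ⌊logb 2 (x 0) - logb 2 (x m)⌋ := by
  induction m with
  | zero => simp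
  | succ n ih =>
      rw [Finset.sum_range_succ]
      have h1 : ∑ i ∈ Finset.range n, ⌊logb 2 (x i) - logb 2 (x (i + 1))⌋ ≤
          ⌊logb 2 (x 0) - logb 2 (x n)⌋ := by
        apply ih
        · intro i hi; exact hpos i (hi.trans (Nat.le_succ n))
        · intro i hi; exact hmono i (hi.trans (Nat.lt_succ_self n))
      calc _ ≤ ⌊logb 2 (x 0) - logb 2 (x n)⌋ + ⌊logb 2 (x n) - logb 2 (x (n+1))⌋ :=
              add_le_add_left h1 _
        _ ≤ ⌊logb 2 (x 0) - logb 2 (x (n+1))⌋ := by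
              rw [Int.le_floor]
              push_cast
              have := Int.floor_le (logb 2 (x 0) - logb 2 (x n))
              have := Int.floor_le (logb 2 (x n) - logb 2 (x (n+1)))
              linarith
end
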